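/- In a k-connected graph, for any vertex s contained in some small tight set, there is a unique inclusion-minimal small tight set R_s containing s (i.e., the intersection of all small tight sets containing s is itself a small tight set containing s). -/

import Mathlib

open Set

variable {V : Type*} [Fintype V] [DecidableEq V]

/-- The boundary (neighborhood) of a vertex set: vertices outside `A` adjacent to `A`. -/
def bdry (G : SimpleGraph V) (A : Set V) : Set V := {v | v ∉ A ∧ ∃ a ∈ A, G.Adj a v}

/-- The "node complement" `A* = V \ (A ∪ ∂A)`. -/
def nstar (G : SimpleGraph V) (A : Set V) : Set V := (A ∪ bdry G A)ᶜ

/-- `C` is a vertex set separating `s` from `t`. -/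
def IsSep (G : SimpleGraph V) (s t : V) (C : Set V) : Prop :=
  s ∉ C ∧ t ∉ C ∧ ∀ p : G.Walk s t, ∃ v ∈ C, v ∈ p.support

/-- `κ(s,t)`: minimum size of an `s`–`t` vertex cut. -/
noncomputable def kappa (G : SimpleGraph V) (s t : V) : ℕ :=
  sInf {n | ∃ C : Set V, C.ncard = n ∧ IsSep G s t C}

/-- A set is tight if `|∂A| = k` and `A* ≠ ∅`. -/
def Tight (G : SimpleGraph V) (k : ℕ) (A : Set V) : Prop :=
  (bdry G A).ncard = k ∧ (nstar G A).Nonempty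

/-- A set is small if `|A| ≤ (n - k)/2`. -/
def SmallSet (k : ℕ) (A : Set V) : Prop := 2 * A.ncard + k ≤ Fintype.card V

/-- `G` is `k`-connected. -/
def KConn (G : SimpleGraph V) (k : ℕ) : Prop :=
  k + 1 ≤ Fintype.card V ∧
    ∀ s t : V, s ≠ t → ∀ C : Set V, IsSep G s t C → k ≤ C.ncard

/-- degree of a vertex -/
noncomputable def deg (G : SimpleGraph V) (v : V) : ℕ := (G.neighborSet v).ncard

/-- `X` is an `st`-tight set: `s ∈ X`, `t ∈ X*` and `|∂X| = κ(s,t)`. -/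
def TightST (G : SimpleGraph V) (s t : V) (X : Set V) : Prop :=
  s ∈ X ∧ t ∈ nstar G X ∧ (bdry G X).ncard = kappa G s t

/-- `R_s`: intersection of all small tight sets containing `s`. -/
def Rmin (G : SimpleGraph V) (k : ℕ) (s : V) : Set V :=
  ⋂₀ {A : Set V | Tight G k A ∧ SmallSet k A ∧ s ∈ A}

/-- Two sets are laminar if disjoint or one contains the other. -/
def Laminar (X Y : Set V) : Prop := Disjoint X Y ∨ X ⊆ Y ∨ Y ⊆ X

/-- `d`-degeneracy: every nonempty vertex subset has a vertex with at most `d`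
neighbors inside it. -/
def Degenerate (G : SimpleGraph V) (d : ℕ) : Prop :=
  ∀ W : Set V, W.Nonempty → ∃ v ∈ W, (G.neighborSet v ∩ W).ncard ≤ d

/-- The set of vertices reachable from `s` avoiding `C`. -/
def Reach (G : SimpleGraph V) (C : Set V) (s : V) : Set V :=
  {v | ∃ p : G.Walk s v, ∀ u ∈ p.support, u ∉ C}

lemma walk_hits_bdry (G : SimpleGraph V) (X : Set V) :
    ∀ {a b : V} (p : G.Walk a b), a ∈ X → b ∉ X →
      ∃ v ∈ bdry G X, v ∈ p.support := by
  intro a b p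
  induction p with
  | nil => intro ha hb; exact absurd ha hb
  | @cons u c d hadj q ih =>
    intro ha hb
    by_cases hc : c ∈ X
    · obtain ⟨v, hv, hvs⟩ := ih hc hb
      exact ⟨v, hv, by simp [SimpleGraph.Walk.support_cons, hvs]⟩
    · exact ⟨c, ⟨hc, u, ha, hadj⟩, by simp [SimpleGraph.Walk.support_cons]⟩

lemma k_le_bdry (G : SimpleGraph V) (k : ℕ) (hG : KConn G k) (X : Set V)
    (hne : X.Nonempty) (hstar : (nstar G X).Nonempty) : k ≤ (bdry G X).ncard := by
  obtain ⟨x, hx⟩ := hne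
  obtain ⟨t, ht⟩ := hstar
  have ht' : t ∉ X ∪ bdry G X := ht
  have hxt : x ≠ t := by rintro rfl; exact ht' (Or.inl hx)
  refine hG.2 x t hxt _ ⟨fun h => h.1 hx, fun h => ht' (Or.inr h), ?_⟩
  intro p
  exact walk_hits_bdry G X p hx (fun h => ht' (Or.inl h))

lemma bdry_mono_nstar (G : SimpleGraph V) {X Y : Set V} (h : X ⊆ Y) :
    nstar G Y ⊆ nstar G X := by
  intro v hv
  have hv' : v ∉ Y ∪ bdry G Y := hv
  intro hmem
  rcases hmem with hX | hB
  · exact hv' (Or.inl (h hX))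
  · obtain ⟨hvX, a, haX, hadj⟩ := hB
    by_cases hvY : v ∈ Y
    · exact hv' (Or.inl hvY)
    · exact hv' (Or.inr ⟨hvY, a, h haX, hadj⟩)

lemma bdry_submod (G : SimpleGraph V) (A B : Set V) :
    (bdry G (A ∩ B)).ncard + (bdry G (A ∪ B)).ncard
      ≤ (bdry G A).ncard + (bdry G B).ncard := by
  have h1 : bdry G (A ∩ B) ∪ bdry G (A ∪ B) ⊆ bdry G A ∪ bdry G B := by
    rintro v (⟨hv, a, ⟨haA, haB⟩, hadj⟩ | ⟨hv, a, (haA | haB), hadj⟩)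
    · by_cases hvA : v ∈ A
      · have hvB : v ∉ B := fun hvB => hv ⟨hvA, hvB⟩
        exact Or.inr ⟨hvB, a, haB, hadj⟩
      · exact Or.inl ⟨hvA, a, haA, hadj⟩
    · exact Or.inl ⟨fun h => hv (Or.inl h), a, haA, hadj⟩
    · exact Or.inr ⟨fun h => hv (Or.inr h), a, haB, hadj⟩
  have h2 : bdry G (A ∩ B) ∩ bdry G (A ∪ B) ⊆ bdry G A ∩ bdry G B := by
    rintro v ⟨⟨_, a, ⟨haA, haB⟩, hadj⟩, ⟨hv, _⟩⟩
    exact ⟨⟨fun h => hv (Or.inl h), a, haA, hadj⟩,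
           ⟨fun h => hv (Or.inr h), a, haB, hadj⟩⟩
  have e1 : (bdry G (A ∩ B)).ncard + (bdry G (A ∪ B)).ncard
      = (bdry G (A ∩ B) ∪ bdry G (A ∪ B)).ncard
        + (bdry G (A ∩ B) ∩ bdry G (A ∪ B)).ncard :=
    (Set.ncard_union_add_ncard_inter _ _ (Set.toFinite _) (Set.toFinite _)).symm
  have e2 : (bdry G A ∪ bdry G B).ncard + (bdry G A ∩ bdry G B).ncard
      = (bdry G A).ncard + (bdry G B).ncard :=
    Set.ncard_union_add_ncard_inter _ _ (Set.toFinite _) (Set.toFinite _)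
  calc (bdry G (A ∩ B)).ncard + (bdry G (A ∪ B)).ncard
      = _ + _ := e1
    _ ≤ (bdry G A ∪ bdry G B).ncard + (bdry G A ∩ bdry G B).ncard :=
        Nat.add_le_add (Set.ncard_le_ncard h1 (Set.toFinite _))
          (Set.ncard_le_ncard h2 (Set.toFinite _))
    _ = _ := e2

lemma inter_tight (G : SimpleGraph V) (k : ℕ) (s : V) (hG : KConn G k) {A B : Set V}
    (hA : Tight G k A ∧ SmallSet k A ∧ s ∈ A)
    (hB : Tight G k B ∧ SmallSet k B ∧ s ∈ B) :
    Tight G k (A ∩ B) ∧ SmallSet k (A ∩ B) ∧ s ∈ A ∩ B := by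
  obtain ⟨⟨hbA, hsA⟩, hsmA, hsA'⟩ := hA
  obtain ⟨⟨hbB, hsB⟩, hsmB, hsB'⟩ := hB
  have hstarI : (nstar G (A ∩ B)).Nonempty :=
    hsA.mono (bdry_mono_nstar G Set.inter_subset_left)
  -- bound on |A| + |B|
  have hcard : A.ncard + B.ncard + k ≤ Fintype.card V := by
    unfold SmallSet at hsmA hsmB
    omega
  -- |∂(A ∪ B)| ≥ k
  have hU : k ≤ (bdry G (A ∪ B)).ncard := by
    by_cases hstarU : (nstar G (A ∪ B)).Nonempty
    · exact k_le_bdry G k hG (A ∪ B) ⟨s, Or.inl hsA'⟩ hstarU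
    · -- nstar empty: ∂(A∪B) = (A∪B)ᶜ
      have hcompl : (A ∪ B)ᶜ ⊆ bdry G (A ∪ B) := by
        intro v hv
        by_contra hvb
        exact hstarU ⟨v, fun h => h.elim hv hvb⟩
      have h1 : (A ∪ B).ncard + ((A ∪ B)ᶜ).ncard = Fintype.card V := by
        rw [Set.ncard_add_ncard_compl, Nat.card_eq_fintype_card]
      have h2 : (A ∪ B).ncard ≤ A.ncard + B.ncard :=
        Set.ncard_union_le _ _
      have h3 : ((A ∪ B)ᶜ).ncard ≤ (bdry G (A ∪ B)).ncard :=
        Set.ncard_le_ncard hcompl (Set.toFinite _)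
      omega
  have hsub := bdry_submod G A B
  have hI : k ≤ (bdry G (A ∩ B)).ncard :=
    k_le_bdry G k hG (A ∩ B) ⟨s, hsA', hsB'⟩ hstarI
  have hIcard : (bdry G (A ∩ B)).ncard = k := by omega
  refine ⟨⟨hIcard, hstarI⟩, ?_, hsA', hsB'⟩
  have : (A ∩ B).ncard ≤ A.ncard :=
    Set.ncard_le_ncard Set.inter_subset_left (Set.toFinite _)
  unfold SmallSet at hsmA ⊢
  omega

lemma sInter_prop {P : Set V → Prop}
    (hP : ∀ A B, P A → P B → P (A ∩ B)) (S : Set (Set V))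
    (hne : S.Nonempty) (hall : ∀ A ∈ S, P A) : P (⋂₀ S) := by
  refine Set.Finite.induction_on
    (motive := fun T _ => T.Nonempty → (∀ A ∈ T, P A) → P (⋂₀ T))
    S (Set.toFinite S) (fun h _ => absurd h (by simp)) ?_ hne hall
  intro A F _ _ ih _ hallF
  rw [Set.sInter_insert]
  rcases F.eq_empty_or_nonempty with rfl | hFne
  · simpa using hallF A (Set.mem_insert _ _)
  · exact hP _ _ (hallF A (Set.mem_insert _ _))
      (ih hFne fun B hB => hallF B (Or.inr hB))

theorem stmt2 (G : SimpleGraph V) (k : ℕ) (s : V) (hG : KConn G k)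
    (hs : ∃ A : Set V, Tight G k A ∧ SmallSet k A ∧ s ∈ A) :
    Tight G k (Rmin G k s) ∧ SmallSet k (Rmin G k s) ∧ s ∈ Rmin G k s := by
  obtain ⟨A, hA⟩ := hs
  exact sInter_prop (P := fun X => Tight G k X ∧ SmallSet k X ∧ s ∈ X)
    (fun X Y hX hY => inter_tight G k s hG hX hY)
    {A : Set V | Tight G k A ∧ SmallSet k A ∧ s ∈ A} ⟨A, hA⟩ (fun B hB => hB)
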